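/- If G is a graph of order n ≥ 4 in which at most one vertex has degree ≥ n−2, then for any integer t ≥ 2: γ_R(S(G,t)) ≥ n^{t-2}(2n − 1). -/

import Mathlib

variable {V : Type*}

/-- A Roman dominating function: every vertex with value 0 has a neighbor with value 2. -/
def IsRDF (G : SimpleGraph V) (f : V → Fin 3) : Prop :=
  ∀ v, f v = 0 → ∃ u, G.Adj u v ∧ f u = 2

/-- The weight of a Roman dominating function. -/
def romanWeight [Fintype V] (f : V → Fin 3) : ℕ := ∑ v, (f v : ℕ)

/-- The Roman domination number. -/
noncomputable def gammaR [Fintype V] (G : SimpleGraph V) : ℕ :=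
  sInf {k | ∃ f : V → Fin 3, IsRDF G f ∧ romanWeight f = k}

/-- A dominating set. -/
def IsDomSet (G : SimpleGraph V) (D : Set V) : Prop :=
  ∀ v, v ∈ D ∨ ∃ u ∈ D, G.Adj u v

/-- The domination number. -/
noncomputable def gamma [Fintype V] (G : SimpleGraph V) : ℕ :=
  sInf {k | ∃ D : Set V, IsDomSet G D ∧ D.ncard = k}

/-- The generalized Sierpiński graph `S(G,t)` on words of length `t` over `V`. -/
def sierpinski (G : SimpleGraph V) (t : ℕ) : SimpleGraph (Fin t → V) where
  Adj x y := ∃ i : Fin t, (∀ j, j < i → x j = y j) ∧ G.Adj (x i) (y i) ∧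
    (∀ j, i < j → x j = y i ∧ y j = x i)
  symm := ⟨by
    rintro x y ⟨i, h1, h2, h3⟩
    exact ⟨i, fun j hj => (h1 j hj).symm, h2.symm, fun j hj => ⟨(h3 j hj).2, (h3 j hj).1⟩⟩⟩
  loopless := ⟨by
    rintro x ⟨i, -, h2, -⟩
    exact G.irrefl h2⟩

namespace SierAux

/-- Witness for adjacency in the Sierpiński graph. -/
def Wit (G : SimpleGraph V) {m : ℕ} (x y : Fin m → V) (i : Fin m) : Prop :=
  (∀ j, j < i → x j = y j) ∧ G.Adj (x i) (y i) ∧ (∀ j, i < j → x j = y i ∧ y j = x i)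

lemma adj_iff {G : SimpleGraph V} {m : ℕ} {x y : Fin m → V} :
    (sierpinski G m).Adj x y ↔ ∃ i, Wit G x y i := Iff.rfl

/-- The word with prefix `p` and last two letters `a`, `b`. -/
def wd {s : ℕ} (p : Fin s → V) (a b : V) : Fin (s + 2) → V :=
  Fin.snoc (Fin.snoc p a) b

@[simp] lemma wd_last {s : ℕ} (p : Fin s → V) (a b : V) :
    wd p a b (Fin.last (s + 1)) = b := by simp [wd]

@[simp] lemma wd_sec {s : ℕ} (p : Fin s → V) (a b : V) :
    wd p a b ((Fin.last s).castSucc) = a := by simp [wd]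

@[simp] lemma wd_cast {s : ℕ} (p : Fin s → V) (a b : V) (j : Fin s) :
    wd p a b (j.castSucc.castSucc) = p j := by simp [wd]

lemma fin_cases3 {s : ℕ} (i : Fin (s + 2)) :
    i = Fin.last (s + 1) ∨ i = (Fin.last s).castSucc ∨ ∃ j : Fin s, i = j.castSucc.castSucc := by
  induction i using Fin.lastCases with
  | last => exact Or.inl rfl
  | cast i' =>
    induction i' using Fin.lastCases with
    | last => exact Or.inr (Or.inl rfl)
    | cast j => exact Or.inr (Or.inr ⟨j, rfl⟩)

lemma eq_wd {s : ℕ} (y : Fin (s + 2) → V) :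
    y = wd (fun j => y (j.castSucc.castSucc)) (y ((Fin.last s).castSucc)) (y (Fin.last (s + 1))) := by
  funext i
  rcases fin_cases3 i with h | h | ⟨j, h⟩ <;> subst h <;> simp

lemma wd_inj {s : ℕ} {p p' : Fin s → V} {a a' b b' : V} (h : wd p a b = wd p' a' b') :
    p = p' ∧ a = a' ∧ b = b' := by
  refine ⟨funext fun j => ?_, ?_, ?_⟩
  · have := congrFun h (j.castSucc.castSucc); simpa using this
  · have := congrFun h ((Fin.last s).castSucc); simpa using this
  · have := congrFun h (Fin.last (s + 1)); simpa using this

lemma classify {s : ℕ} {G : SimpleGraph V} {p : Fin s → V} {a b : V} {y : Fin (s + 2) → V}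
    {i : Fin (s + 2)} (hw : Wit G (wd p a b) y i) :
    (∃ b', G.Adj b b' ∧ y = wd p a b') ∨
    (G.Adj a b ∧ y = wd p b a) ∨
    (a = b ∧ (∃ q d, y = wd q d d ∧ G.Adj d a) ∧ i < Fin.last (s + 1)) := by
  obtain ⟨h1, h2, h3⟩ := hw
  rcases fin_cases3 i with hi | hi | ⟨j₀, hi⟩ <;> subst hi
  · left
    refine ⟨y (Fin.last (s + 1)), by simpa using h2, ?_⟩
    funext j
    rcases fin_cases3 j with hj | hj | ⟨j', hj⟩ <;> subst hj
    · simp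
    · have h := h1 ((Fin.last s).castSucc) (Fin.castSucc_lt_last _)
      rw [wd_sec] at h; rw [wd_sec]; exact h.symm
    · have h := h1 (j'.castSucc.castSucc) (Fin.castSucc_lt_last _)
      rw [wd_cast] at h; rw [wd_cast]; exact h.symm
  · right; left
    have hb := h3 (Fin.last (s + 1)) (Fin.castSucc_lt_last _)
    rw [wd_last, wd_sec] at hb
    constructor
    · have h2' := h2
      rw [wd_sec, ← hb.1] at h2'; exact h2'
    · funext j
      rcases fin_cases3 j with hj | hj | ⟨j', hj⟩ <;> subst hj
      · rw [wd_last, hb.2]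
      · rw [wd_sec, ← hb.1]
      · have hlt : j'.castSucc.castSucc < (Fin.last s).castSucc :=
          Fin.castSucc_lt_castSucc_iff.mpr (Fin.castSucc_lt_last j')
        have h := h1 (j'.castSucc.castSucc) hlt
        rw [wd_cast] at h; rw [wd_cast]; exact h.symm
  · right; right
    have hlt1 : j₀.castSucc.castSucc < (Fin.last s).castSucc :=
      Fin.castSucc_lt_castSucc_iff.mpr (Fin.castSucc_lt_last j₀)
    have hlt2 : j₀.castSucc.castSucc < Fin.last (s + 1) := Fin.castSucc_lt_last _
    have k1 := h3 _ hlt1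
    have k2 := h3 _ hlt2
    rw [wd_sec] at k1; rw [wd_last] at k2
    refine ⟨k1.1.trans k2.1.symm,
      ⟨fun j => y (j.castSucc.castSucc), wd p a b (j₀.castSucc.castSucc), ?_, ?_⟩, hlt2⟩
    · have e := eq_wd y
      rw [k1.2, k2.2] at e
      exact e
    · have h2' := h2
      rw [← k1.1] at h2'
      exact h2'

lemma witU {s : ℕ} {G : SimpleGraph V} {x x' y : Fin (s + 2) → V} {i i' : Fin (s + 2)}
    (h : Wit G x y i) (h' : Wit G x' y i')
    (hi : i < Fin.last (s + 1)) (hi' : i' < Fin.last (s + 1)) : x = x' := by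
  obtain ⟨h1, h2, h3⟩ := h; obtain ⟨h1', h2', h3'⟩ := h'
  have hii : i = i' := by
    by_contra hne
    rcases lt_or_gt_of_ne hne with hlt | hlt
    · have e1 := (h3 i' hlt).2
      have e2 := (h3 (Fin.last (s + 1)) hi).2
      have e3 := (h3' (Fin.last (s + 1)) hi').2
      have hx : x' i' = y i' := by rw [← e3, e2, e1]
      rw [hx] at h2'
      exact G.irrefl h2'
    · have e1 := (h3' i hlt).2
      have e2 := (h3' (Fin.last (s + 1)) hi').2
      have e3 := (h3 (Fin.last (s + 1)) hi).2
      have hx : x i = y i := by rw [← e3, e2, e1]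
      rw [hx] at h2
      exact G.irrefl h2
  subst hii
  funext j
  rcases lt_trichotomy j i with hj | hj | hj
  · exact (h1 j hj).trans (h1' j hj).symm
  · subst hj
    exact ((h3 (Fin.last (s + 1)) hi).2.symm).trans (h3' (Fin.last (s + 1)) hi).2
  · exact ((h3 j hj).1).trans ((h3' j hj).1).symm

end SierAux

namespace SierAux

open Finset

lemma core [Fintype V] (G : SimpleGraph V) (n : ℕ) (hn : Fintype.card V = n)
    (hn4 : 4 ≤ n)
    (hdeg : ∀ u v : V, n - 2 ≤ (G.neighborSet u).ncard →
      n - 2 ≤ (G.neighborSet v).ncard → u = v)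
    (g : V → V → Fin 3)
    (H1 : ∀ a b, a ≠ b → g a b = 0 →
      (∃ u, G.Adj u b ∧ g a u = 2) ∨ (G.Adj a b ∧ g b a = 2)) :
    2 * n - 1 + {d | g d d = 2}.ncard ≤
      (∑ a, ∑ b, ((g a b : ℕ))) + {a | g a a = 0 ∧ ¬∃ u, G.Adj u a ∧ g a u = 2}.ncard := by
  classical
  set W : V → ℕ := fun a => ∑ b, (g a b : ℕ) with hWdef
  -- value facts
  have hval2 : ∀ {x : Fin 3}, x = 2 → (x : ℕ) = 2 := by rintro x rfl; rfl
  have hval0 : ∀ {x : Fin 3}, (x : ℕ) = 0 → x = 0 := by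
    intro x h; exact Fin.val_injective (by simpa using h)
  have hvalpos : ∀ {x : Fin 3}, x ≠ 0 → 1 ≤ (x : ℕ) := by
    intro x hx
    have : (x : ℕ) ≠ 0 := fun h => hx (hval0 h)
    omega
  have pair_le : ∀ (a : V) {b₁ b₂ : V}, b₁ ≠ b₂ → (g a b₁ : ℕ) + (g a b₂ : ℕ) ≤ W a := by
    intro a b₁ b₂ hne
    have : ∑ x ∈ ({b₁, b₂} : Finset V), (g a x : ℕ) = (g a b₁ : ℕ) + (g a b₂ : ℕ) :=
      Finset.sum_pair hne
    rw [← this]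
    exact Finset.sum_le_sum_of_subset (Finset.subset_univ _)
  have single_le : ∀ a b : V, (g a b : ℕ) ≤ W a := fun a b =>
    Finset.single_le_sum (f := fun x => (g a x : ℕ)) (fun _ _ => Nat.zero_le _)
      (Finset.mem_univ b)
  -- bridge : neighborSet ncard vs filter card
  have hbridge : ∀ a : V, (G.neighborSet a).ncard = (univ.filter fun b => G.Adj a b).card := by
    intro a
    rw [Set.ncard_eq_toFinset_card']
    congr 1
    ext b
    simp [SimpleGraph.neighborSet]
    exact Set.mem_toFinset.trans Iff.rfl
  -- W ≤ 1 forces big degree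
  have hW1 : ∀ a : V, W a ≤ 1 → n - 2 ≤ (G.neighborSet a).ncard := by
    intro a ha
    have hno2 : ∀ u, g a u ≠ 2 := by
      intro u hu
      have h1 := single_le a u
      rw [hval2 hu] at h1
      omega
    have hSup : (univ.filter fun b => g a b ≠ 0).card ≤ 1 := by
      have h1 : (univ.filter fun b => g a b ≠ 0).card ≤ ∑ b, (g a b : ℕ) := by
        rw [Finset.card_filter]
        refine Finset.sum_le_sum ?_
        intro b _
        split_ifs with h
        · exact hvalpos h
        · exact Nat.zero_le _
      have hWa : W a = ∑ b, (g a b : ℕ) := rfl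
      omega
    have hsubset : univ \ insert a (univ.filter fun b => g a b ≠ 0) ⊆
        univ.filter fun b => G.Adj a b := by
      intro b hb
      simp only [Finset.mem_sdiff, Finset.mem_insert, Finset.mem_filter, Finset.mem_univ,
        true_and, not_or, not_not] at hb ⊢
      obtain ⟨hba, hb0⟩ := hb
      rcases H1 a b (Ne.symm hba) hb0 with ⟨u, _, hu2⟩ | ⟨hadj, -⟩
      · exact absurd hu2 (hno2 u)
      · exact hadj
    have hc1 : (insert a (univ.filter fun b => g a b ≠ 0)).card ≤ 2 := by
      have := Finset.card_insert_le a (univ.filter fun b => g a b ≠ 0)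
      omega
    have hc2 : n - 2 ≤ (univ \ insert a (univ.filter fun b => g a b ≠ 0)).card := by
      rw [Finset.card_sdiff_of_subset (Finset.subset_univ _), Finset.card_univ, hn]
      omega
    rw [hbridge]
    exact le_trans hc2 (Finset.card_le_card hsubset)
  -- diagonal 2 + small degree forces weight 3
  have hW3 : ∀ d : V, g d d = 2 → ¬(n - 2 ≤ (G.neighborSet d).ncard) → 3 ≤ W d := by
    intro d hd2 hdd
    have hex : ∃ b, b ≠ d ∧ ¬G.Adj d b := by
      by_contra hcon
      push_neg at hcon
      apply hdd
      have hsub : univ.erase d ⊆ univ.filter fun b => G.Adj d b := by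
        intro b hb
        rw [Finset.mem_erase] at hb
        exact Finset.mem_filter.mpr ⟨Finset.mem_univ _, hcon b hb.1⟩
      have h1 := Finset.card_le_card hsub
      rw [Finset.card_erase_of_mem (Finset.mem_univ d), Finset.card_univ, hn] at h1
      rw [hbridge]
      omega
    obtain ⟨b, hbd, hnadj⟩ := hex
    have hgdd : (g d d : ℕ) = 2 := hval2 hd2
    by_cases hb0 : g d b = 0
    · rcases H1 d b (Ne.symm hbd) hb0 with ⟨u, hub, hu2⟩ | ⟨hadj, -⟩
      · have hud : d ≠ u := by
          rintro rfl
          exact hnadj hub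
        have hp := pair_le d hud
        rw [hgdd, hval2 hu2] at hp
        omega
      · exact absurd hadj hnadj
    · have h1 : 1 ≤ (g d b : ℕ) := hvalpos hb0
      have hp := pair_le d (Ne.symm hbd)
      omega
  -- convert ncards to filter cards
  have hD2 : {d | g d d = 2}.ncard = (univ.filter fun d => g d d = 2).card := by
    rw [Set.ncard_eq_toFinset_card', Set.toFinset_setOf]
  have hEx : {a | g a a = 0 ∧ ¬∃ u, G.Adj u a ∧ g a u = 2}.ncard =
      (univ.filter fun a => g a a = 0 ∧ ¬∃ u, G.Adj u a ∧ g a u = 2).card := by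
    rw [Set.ncard_eq_toFinset_card', Set.toFinset_setOf]
  rw [hD2, hEx]
  set D2 : Finset V := univ.filter fun d => g d d = 2 with hD2def
  set ExtF : Finset V := univ.filter fun a => g a a = 0 ∧ ¬∃ u, G.Adj u a ∧ g a u = 2
    with hExtdef
  have hSW : (∑ a, ∑ b, ((g a b : ℕ))) = ∑ a, W a := rfl
  rw [hSW]
  have hD2mem : ∀ d, d ∈ D2 ↔ g d d = 2 := by
    intro d; simp [hD2def]
  -- main case analysis
  by_cases hC : ∃ a₀, W a₀ ≤ 1
  · obtain ⟨a₀, ha₀⟩ := hC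
    have hspec := hW1 a₀ ha₀
    have hothers : ∀ b, b ≠ a₀ → 2 ≤ W b := by
      intro b hb
      by_contra hcon
      push_neg at hcon
      exact hb (hdeg b a₀ (hW1 b (by omega)) hspec)
    have hD2ne : ∀ d, g d d = 2 → d ≠ a₀ := by
      rintro d hd rfl
      have h1 := single_le d d
      rw [hval2 hd] at h1
      omega
    have hD2w : ∀ d, g d d = 2 → 3 ≤ W d := by
      intro d hd
      refine hW3 d hd ?_
      intro hcon
      exact hD2ne d hd (hdeg d a₀ hcon hspec)
    have hsum : ∑ b ∈ univ.erase a₀, (2 + if g b b = 2 then 1 else 0) ≤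
        ∑ b ∈ univ.erase a₀, W b := by
      refine Finset.sum_le_sum ?_
      intro b hb
      have hbne : b ≠ a₀ := (Finset.mem_erase.mp hb).1
      split_ifs with h
      · have := hD2w b h; omega
      · have := hothers b hbne; omega
    have hsplit : W a₀ + ∑ b ∈ univ.erase a₀, W b = ∑ b, W b :=
      Finset.add_sum_erase _ _ (Finset.mem_univ _)
    have hfilter : (univ.erase a₀).filter (fun b => g b b = 2) = D2 := by
      ext d
      simp only [Finset.mem_filter, Finset.mem_erase, Finset.mem_univ, true_and, and_true,
        hD2def]
      constructor
      · rintro ⟨-, h⟩; exact h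
      · intro h; exact ⟨hD2ne d h, h⟩
    have hlhs : ∑ b ∈ univ.erase a₀, (2 + if g b b = 2 then 1 else 0) =
        2 * (n - 1) + D2.card := by
      rw [Finset.sum_add_distrib, Finset.sum_const, ← Finset.card_filter, hfilter,
        Finset.card_erase_of_mem (Finset.mem_univ _), Finset.card_univ, hn]
      simp [Nat.mul_comm]
    by_cases hz : W a₀ = 0
    · have hmem : a₀ ∈ ExtF := by
        have hall : ∀ b, (g a₀ b : ℕ) = 0 := by
          intro b
          have := single_le a₀ b
          omega
        rw [hExtdef, Finset.mem_filter]
        refine ⟨Finset.mem_univ _, hval0 (hall a₀), ?_⟩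
        rintro ⟨u, -, hu2⟩
        have := hall u
        rw [hval2 hu2] at this
        omega
      have hE : 1 ≤ ExtF.card := Finset.card_pos.mpr ⟨a₀, hmem⟩
      omega
    · omega
  · push_neg at hC
    have hall : ∀ a, 2 ≤ W a := by intro a; have := hC a; omega
    by_cases hB : ∃ d₀, g d₀ d₀ = 2 ∧ W d₀ ≤ 2
    · obtain ⟨d₀, hd₀, hW₀⟩ := hB
      have hd₀deg : n - 2 ≤ (G.neighborSet d₀).ncard := by
        by_contra h
        have := hW3 d₀ hd₀ h
        omega
      have hothers : ∀ d, g d d = 2 → d ≠ d₀ → 3 ≤ W d := by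
        intro d hd hdd
        refine hW3 d hd ?_
        intro h
        exact hdd (hdeg d d₀ h hd₀deg)
      have hsum : ∑ a, (2 + if g a a = 2 ∧ a ≠ d₀ then 1 else 0) ≤ ∑ a, W a := by
        refine Finset.sum_le_sum ?_
        intro a _
        split_ifs with h
        · have := hothers a h.1 h.2; omega
        · have := hall a; omega
      have hfilter : univ.filter (fun a => g a a = 2 ∧ a ≠ d₀) = D2.erase d₀ := by
        ext d
        simp only [Finset.mem_filter, Finset.mem_erase, Finset.mem_univ, true_and, hD2def]
        tauto
      have hmemd₀ : d₀ ∈ D2 := (hD2mem d₀).mpr hd₀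
      have hlhs : ∑ a, (2 + if g a a = 2 ∧ a ≠ d₀ then 1 else 0) =
          2 * n + (D2.card - 1) := by
        rw [Finset.sum_add_distrib, Finset.sum_const, ← Finset.card_filter, hfilter,
          Finset.card_erase_of_mem hmemd₀, Finset.card_univ, hn]
        simp [Nat.mul_comm]
      have hk : 1 ≤ D2.card := Finset.card_pos.mpr ⟨d₀, hmemd₀⟩
      omega
    · push_neg at hB
      have h3 : ∀ d, g d d = 2 → 3 ≤ W d := by
        intro d hd
        have := hB d hd
        omega
      have hsum : ∑ a, (2 + if g a a = 2 then 1 else 0) ≤ ∑ a, W a := by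
        refine Finset.sum_le_sum ?_
        intro a _
        split_ifs with h
        · have := h3 a h; omega
        · have := hall a; omega
      have hlhs : ∑ a, (2 + if g a a = 2 then 1 else 0) = 2 * n + D2.card := by
        rw [Finset.sum_add_distrib, Finset.sum_const, ← Finset.card_filter, Finset.card_univ,
          hn]
        simp [Nat.mul_comm, hD2def]
      omega

end SierAux

namespace SierAux

open Finset

/-- The equivalence splitting words of length `s+2` into prefix and the last two letters. -/
def wdEquiv (s : ℕ) : ((Fin s → V) × V × V) ≃ (Fin (s + 2) → V) where
  toFun z := wd z.1 z.2.1 z.2.2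
  invFun x := (fun j => x (j.castSucc.castSucc), x ((Fin.last s).castSucc), x (Fin.last (s + 1)))
  left_inv z := by
    obtain ⟨p, a, b⟩ := z
    simp
  right_inv x := (eq_wd x).symm

theorem main_bound [Fintype V] (G : SimpleGraph V) (n : ℕ) (hn : Fintype.card V = n)
    (hn4 : 4 ≤ n)
    (hdeg : ∀ u v : V, n - 2 ≤ (G.neighborSet u).ncard →
      n - 2 ≤ (G.neighborSet v).ncard → u = v)
    (s : ℕ) (f : (Fin (s + 2) → V) → Fin 3) (hf : IsRDF (sierpinski G (s + 2)) f) :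
    n ^ s * (2 * n - 1) ≤ romanWeight f := by
  classical
  -- per-block function
  set g : (Fin s → V) → V → V → Fin 3 := fun p a b => f (wd p a b) with hgdef
  -- H1 for each block
  have hH1 : ∀ (p : Fin s → V) (a b : V), a ≠ b → g p a b = 0 →
      (∃ u, G.Adj u b ∧ g p a u = 2) ∨ (G.Adj a b ∧ g p b a = 2) := by
    intro p a b hab h0
    obtain ⟨y, hyadj, hy2⟩ := hf _ h0
    obtain ⟨i, hw⟩ := adj_iff.mp hyadj.symm
    rcases classify hw with ⟨b', hbb', hy⟩ | ⟨hab', hy⟩ | ⟨heq, -, -⟩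
    · subst hy
      exact Or.inl ⟨b', hbb'.symm, hy2⟩
    · subst hy
      exact Or.inr ⟨hab', hy2⟩
    · exact absurd heq hab
  -- external domination yields a "dominator" diagonal vertex with witness
  have hExt : ∀ (p : Fin s → V) (a : V), g p a a = 0 → (¬∃ u, G.Adj u a ∧ g p a u = 2) →
      ∃ (qd : (Fin s → V) × V) (i : Fin (s + 2)),
        Wit G (wd p a a) (wd qd.1 qd.2 qd.2) i ∧ i < Fin.last (s + 1) ∧
          f (wd qd.1 qd.2 qd.2) = 2 := by
    intro p a h0 hno
    obtain ⟨y, hyadj, hy2⟩ := hf _ h0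
    obtain ⟨i, hw⟩ := adj_iff.mp hyadj.symm
    rcases classify hw with ⟨b', hbb', hy⟩ | ⟨hab', -⟩ | ⟨-, ⟨q, d, hy, -⟩, hilt⟩
    · subst hy
      exact absurd ⟨b', hbb'.symm, hy2⟩ hno
    · exact absurd hab' (G.irrefl (v := a))
    · subst hy
      exact ⟨(q, d), i, hw, hilt, hy2⟩
  -- counting of externally dominated diagonals vs dominators
  set ExtP : (Fin s → V) × V → Prop :=
    fun pa => g pa.1 pa.2 pa.2 = 0 ∧ ¬∃ u, G.Adj u pa.2 ∧ g pa.1 pa.2 u = 2 with hExtPdef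
  set DomP : (Fin s → V) × V → Prop := fun qd => g qd.1 qd.2 qd.2 = 2 with hDomPdef
  have hcard : (univ.filter ExtP).card ≤ (univ.filter DomP).card := by
    have hchoice : ∀ pa : (Fin s → V) × V, ExtP pa →
        ∃ (qd : (Fin s → V) × V) (i : Fin (s + 2)),
          Wit G (wd pa.1 pa.2 pa.2) (wd qd.1 qd.2 qd.2) i ∧ i < Fin.last (s + 1) ∧
            f (wd qd.1 qd.2 qd.2) = 2 :=
      fun pa hpa => hExt pa.1 pa.2 hpa.1 hpa.2
    refine Finset.card_le_card_of_injOn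
      (fun pa => if h : ExtP pa then (hchoice pa h).choose else pa) ?_ ?_
    · intro pa hpa
      have hpa' : ExtP pa := (Finset.mem_filter.mp hpa).2
      show (if h : ExtP pa then (hchoice pa h).choose else pa) ∈ filter DomP univ
      rw [dif_pos hpa']
      obtain ⟨i, hwit, hlt, h2⟩ := (hchoice pa hpa').choose_spec
      exact Finset.mem_filter.mpr ⟨Finset.mem_univ _, h2⟩
    · intro pa₁ h₁ pa₂ h₂ heq
      have hp₁ : ExtP pa₁ := (Finset.mem_filter.mp (Finset.mem_coe.mp h₁)).2
      have hp₂ : ExtP pa₂ := (Finset.mem_filter.mp (Finset.mem_coe.mp h₂)).2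
      replace heq : (if h : ExtP pa₁ then (hchoice pa₁ h).choose else pa₁) =
          (if h : ExtP pa₂ then (hchoice pa₂ h).choose else pa₂) := heq
      rw [dif_pos hp₁, dif_pos hp₂] at heq
      obtain ⟨i₁, hw₁, hl₁, -⟩ := (hchoice pa₁ hp₁).choose_spec
      obtain ⟨i₂, hw₂, hl₂, -⟩ := (hchoice pa₂ hp₂).choose_spec
      rw [heq] at hw₁
      have hxx := witU hw₁ hw₂ hl₁ hl₂
      obtain ⟨hpp, haa, -⟩ := wd_inj hxx
      exact Prod.ext hpp haa
  -- fiberwise counting of cards over the product type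
  have hDomsum : (univ.filter DomP).card =
      ∑ p : Fin s → V, (univ.filter fun d => DomP (p, d)).card := by
    rw [Finset.card_filter, Fintype.sum_prod_type]
    congr 1
    funext p
    rw [Finset.card_filter]
  have hExtsum : (univ.filter ExtP).card =
      ∑ p : Fin s → V, (univ.filter fun a => ExtP (p, a)).card := by
    rw [Finset.card_filter, Fintype.sum_prod_type]
    congr 1
    funext p
    rw [Finset.card_filter]
  -- sum decomposition
  have hsum : romanWeight f = ∑ p : Fin s → V, ∑ a : V, ∑ b : V, (g p a b : ℕ) := by
    rw [romanWeight]
    rw [← Fintype.sum_equiv (wdEquiv s) (fun z => (g z.1 z.2.1 z.2.2 : ℕ)) (fun x => (f x : ℕ))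
      (fun z => rfl)]
    rw [Fintype.sum_prod_type]
    congr 1
    funext p
    rw [Fintype.sum_prod_type]
  -- apply the core bound per block and sum
  have hblocks : ∑ p : Fin s → V, (2 * n - 1 + (univ.filter fun d => DomP (p, d)).card) ≤
      ∑ p : Fin s → V, ((∑ a, ∑ b, (g p a b : ℕ)) + (univ.filter fun a => ExtP (p, a)).card) := by
    refine Finset.sum_le_sum ?_
    intro p _
    have h := core G n hn hn4 hdeg (g p) (hH1 p)
    have hD : {d | g p d d = 2}.ncard = (univ.filter fun d => DomP (p, d)).card := by
      rw [Set.ncard_eq_toFinset_card', Set.toFinset_setOf]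
    have hE : {a | g p a a = 0 ∧ ¬∃ u, G.Adj u a ∧ g p a u = 2}.ncard =
        (univ.filter fun a => ExtP (p, a)).card := by
      rw [Set.ncard_eq_toFinset_card', Set.toFinset_setOf]
    rw [hD, hE] at h
    exact h
  rw [Finset.sum_add_distrib, Finset.sum_add_distrib, Finset.sum_const, Finset.card_univ] at hblocks
  have hNcard : Fintype.card (Fin s → V) = n ^ s := by
    rw [Fintype.card_fun, Fintype.card_fin, hn]
  rw [hNcard, smul_eq_mul] at hblocks
  rw [hsum]
  omega

end SierAux


theorem stmt12 [Fintype V] (G : SimpleGraph V) (n : ℕ) (hn : Fintype.card V = n)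
    (hn4 : 4 ≤ n)
    (hdeg : ∀ u v : V, n - 2 ≤ (G.neighborSet u).ncard →
      n - 2 ≤ (G.neighborSet v).ncard → u = v)
    (t : ℕ) (ht : 2 ≤ t) :
    n ^ (t - 2) * (2 * n - 1) ≤ gammaR (sierpinski G t) := by
  classical
  obtain ⟨s, rfl⟩ : ∃ s, t = s + 2 := ⟨t - 2, by omega⟩
  have hne : {k | ∃ f : (Fin (s + 2) → V) → Fin 3,
      IsRDF (sierpinski G (s + 2)) f ∧ romanWeight f = k}.Nonempty := by
    refine ⟨romanWeight (fun _ => (1 : Fin 3)), fun _ => 1, ?_, rfl⟩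
    intro v hv
    exact ((by decide : ¬(1 : Fin 3) = 0) hv).elim
  obtain ⟨f, hf, hfw⟩ := Nat.sInf_mem hne
  have hg : gammaR (sierpinski G (s + 2)) = sInf {k | ∃ f : (Fin (s + 2) → V) → Fin 3,
      IsRDF (sierpinski G (s + 2)) f ∧ romanWeight f = k} := rfl
  rw [hg, ← hfw, show s + 2 - 2 = s from by omega]
  exact SierAux.main_bound G n hn hn4 hdeg s f hf
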